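/- (Instability of the symmetric equilibrium for long shelf life.) Let D ≥ 4 be an integer and τ = 10, α = 1. Let ỹ = (1/(τ(D+1)))·W(τ²(D+1)) be the symmetric equilibrium effort in a D-regular graph. Then W(τ²·e^{-τỹ}) > 1/(D-1); equivalently, D²·(W(τ²e^{-τỹ})/(1 + W(τ²e^{-τỹ})))² > 1, so the linearized two-step best-response map amplifies perturbations. -/

import Mathlib

/-- The Lambert W function on `[0,∞)`: the inverse of `x ↦ x * exp x` on `[0,∞)`. -/
noncomputable def lambertW (x : ℝ) : ℝ :=
  Function.invFunOn (fun t => t * Real.exp t) (Set.Ici 0) x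

private lemma lw_strictMono : StrictMonoOn (fun t => t * Real.exp t) (Set.Ici 0) := by
  intro a ha b hb hab
  simp only [Set.mem_Ici] at ha hb
  have h1 : Real.exp a ≤ Real.exp b := Real.exp_le_exp.mpr hab.le
  show a * Real.exp a < b * Real.exp b
  nlinarith [mul_pos (sub_pos.mpr hab) (Real.exp_pos b), mul_nonneg ha (sub_nonneg.mpr h1)]

private lemma lw_exists (x : ℝ) (hx : 0 ≤ x) :
    ∃ t ∈ Set.Ici (0:ℝ), t * Real.exp t = x := by
  have hcont : ContinuousOn (fun t => t * Real.exp t) (Set.Icc 0 x) :=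
    (continuous_id.mul Real.continuous_exp).continuousOn
  have hx2 : x ∈ Set.Icc ((fun t => t * Real.exp t) 0) ((fun t => t * Real.exp t) x) := by
    simp only [Set.mem_Icc, zero_mul]
    refine ⟨hx, ?_⟩
    nlinarith [Real.one_le_exp hx]
  obtain ⟨t, ht, hft⟩ := intermediate_value_Icc hx hcont hx2
  exact ⟨t, Set.mem_Ici.mpr ht.1, hft⟩

private lemma lw_spec (x : ℝ) (hx : 0 ≤ x) :
    0 ≤ lambertW x ∧ lambertW x * Real.exp (lambertW x) = x := by
  have h := lw_exists x hx
  exact ⟨Function.invFunOn_mem h, Function.invFunOn_eq h⟩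

private lemma lw_eq (a : ℝ) (ha : 0 ≤ a) : lambertW (a * Real.exp a) = a := by
  have hx : 0 ≤ a * Real.exp a := mul_nonneg ha (Real.exp_pos a).le
  obtain ⟨h0, h1⟩ := lw_spec _ hx
  exact lw_strictMono.injOn (Set.mem_Ici.mpr h0) (Set.mem_Ici.mpr ha) h1

private lemma lw_mono {x y : ℝ} (hx : 0 ≤ x) (hxy : x ≤ y) :
    lambertW x ≤ lambertW y := by
  obtain ⟨h0x, h1x⟩ := lw_spec x hx
  obtain ⟨h0y, h1y⟩ := lw_spec y (hx.trans hxy)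
  by_contra h
  push_neg at h
  have := lw_strictMono (Set.mem_Ici.mpr h0y) (Set.mem_Ici.mpr h0x) h
  simp only at this
  rw [h1x, h1y] at this
  linarith

/-- Instability of the symmetric equilibrium for long shelf life: for D ≥ 4, τ = 10, α = 1,
with `ỹ = (1/(τ(D+1))) W(τ²(D+1))`, we have `W(τ²e^{-τỹ}) > 1/(D-1)`, equivalently
`D²·(W(τ²e^{-τỹ})/(1+W(τ²e^{-τỹ})))² > 1`. -/
theorem symmetric_equilibrium_unstable (D : ℕ) (hD : 4 ≤ D) :
    let τ : ℝ := 10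
    let yt : ℝ := (1 / (τ * ((D : ℝ) + 1))) * lambertW (τ ^ 2 * ((D : ℝ) + 1))
    let w : ℝ := lambertW (τ ^ 2 * Real.exp (-τ * yt))
    1 / ((D : ℝ) - 1) < w ∧ 1 < (D : ℝ) ^ 2 * (w / (1 + w)) ^ 2 := by
  intro τ yt w
  have hτ : τ = 10 := rfl
  have hyt : yt = (1 / (τ * ((D : ℝ) + 1))) * lambertW (τ ^ 2 * ((D : ℝ) + 1)) := rfl
  have hw : w = lambertW (τ ^ 2 * Real.exp (-τ * yt)) := rfl
  have hD1 : (4:ℝ) ≤ (D:ℝ) := by exact_mod_cast hD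
  have hDpos : (0:ℝ) < (D:ℝ) + 1 := by linarith
  set L := lambertW (τ ^ 2 * ((D : ℝ) + 1)) with hLdef
  have harg : (0:ℝ) ≤ τ ^ 2 * ((D:ℝ)+1) := by rw [hτ]; positivity
  obtain ⟨hL0, hLe⟩ := lw_spec _ harg
  rw [← hLdef] at hL0 hLe
  -- upper bound L ≤ 3 (D+1)
  have he5 : (6:ℝ) ≤ Real.exp 5 := by nlinarith [Real.add_one_le_exp (5:ℝ)]
  have he15 : (216:ℝ) ≤ Real.exp 15 := by
    have h : Real.exp 15 = Real.exp 5 * Real.exp 5 * Real.exp 5 := by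
      rw [← Real.exp_add, ← Real.exp_add]; norm_num
    rw [h]; nlinarith [Real.exp_pos (5:ℝ)]
  have h15 : (15:ℝ) ≤ 3 * ((D:ℝ)+1) := by linarith
  have hexp : (216:ℝ) ≤ Real.exp (3*((D:ℝ)+1)) :=
    he15.trans (Real.exp_le_exp.mpr h15)
  have hfub : τ ^ 2 * ((D:ℝ)+1) ≤ (3*((D:ℝ)+1)) * Real.exp (3*((D:ℝ)+1)) := by
    rw [hτ]; nlinarith
  have hL3 : L ≤ 3 * ((D:ℝ)+1) := by
    by_contra h
    push_neg at h
    have hmem : (3*((D:ℝ)+1)) ∈ Set.Ici (0:ℝ) := Set.mem_Ici.mpr (by positivity)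
    have := lw_strictMono hmem (Set.mem_Ici.mpr hL0) h
    simp only at this
    rw [hLe] at this
    linarith
  -- τ * yt = L / (D+1)
  have hty : τ * yt = L / ((D:ℝ)+1) := by
    rw [hyt, hτ]
    field_simp
  have hty3 : τ * yt ≤ 3 := by
    rw [hty, div_le_iff₀ hDpos]; linarith
  -- exp 4 < 100
  have he1 : Real.exp 1 < 2.7182818286 := Real.exp_one_lt_d9
  have he4 : Real.exp 4 < 100 := by
    have h : Real.exp 4 = (Real.exp 1)^4 := by
      rw [← Real.exp_nat_mul]; norm_num
    rw [h]
    have := pow_lt_pow_left₀ he1 (Real.exp_pos 1).le (by norm_num : (4:ℕ) ≠ 0)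
    calc (Real.exp 1)^4 < (2.7182818286:ℝ)^4 := this
      _ < 100 := by norm_num
  -- exp 1 ≤ τ^2 * exp (-τ yt)
  have hmono : Real.exp (-3) ≤ Real.exp (-τ * yt) := by
    apply Real.exp_le_exp.mpr; linarith
  have heq : Real.exp 1 = Real.exp 4 * Real.exp (-3) := by
    rw [← Real.exp_add]; norm_num
  have hwe : Real.exp 1 ≤ τ ^ 2 * Real.exp (-τ * yt) := by
    rw [hτ, heq]
    nlinarith [Real.exp_pos (-3:ℝ), Real.exp_pos (-τ*yt)]
  -- w ≥ 1
  have hWe : lambertW (Real.exp 1) = 1 := by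
    have h := lw_eq 1 zero_le_one
    simpa using h
  have hw1 : (1:ℝ) ≤ w := by
    rw [hw, ← hWe]
    exact lw_mono (Real.exp_pos 1).le hwe
  constructor
  · have h13 : 1/((D:ℝ)-1) ≤ 1/3 := by
      apply one_div_le_one_div_of_le <;> linarith
    linarith
  · have h1w : (0:ℝ) < 1 + w := by linarith
    have hq : (1:ℝ)/2 ≤ w/(1+w) := by
      rw [div_le_div_iff₀ (by norm_num) h1w]
      linarith
    nlinarith [sq_nonneg (w/(1+w) - 1/2), mul_le_mul hD1 hq (by norm_num) (by linarith)]
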